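/- Let R be a commutative ring, B an R-algebra, and S a faithfully flat commutative R-algebra. Then B is perfect if and only if B ⊗_R S is perfect as an S-algebra. -/

import Mathlib

open TensorProduct

/-- Auxiliary: under faithful flatness, base change of a submodule is top iff the
submodule is top. -/
lemma baseChange_eq_top_iff {R B S : Type*} [CommRing R]
    [AddCommGroup B] [Module R B]
    [CommRing S] [Algebra R S] [Module.FaithfullyFlat R S]
    (N : Submodule R B) : N.baseChange S = ⊤ ↔ N = ⊤ := by
  constructor
  · intro h
    rw [← Submodule.Quotient.subsingleton_iff]
    have hsurj : Function.Surjective (N.mkQ.baseChange S) := by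
      have := LinearMap.lTensor_surjective S (g := N.mkQ) N.mkQ_surjective
      exact this
    have hker : N.baseChange S ≤ LinearMap.ker (N.mkQ.baseChange S) := by
      rw [Submodule.baseChange_eq_span, Submodule.span_le]
      rintro - ⟨b, hb, rfl⟩
      simp [LinearMap.mem_ker, (Submodule.Quotient.mk_eq_zero N).2 hb]
    have hzero : ∀ x : S ⊗[R] B, N.mkQ.baseChange S x = 0 := by
      intro x
      have : x ∈ N.baseChange S := h ▸ Submodule.mem_top
      exact hker this
    have hsub : Subsingleton (S ⊗[R] (B ⧸ N)) := by
      constructor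
      intro a b
      obtain ⟨x, rfl⟩ := hsurj a
      obtain ⟨y, rfl⟩ := hsurj b
      rw [hzero x, hzero y]
    exact Module.FaithfullyFlat.lTensor_reflects_triviality R S _
  · rintro rfl
    exact Submodule.baseChange_top ..

theorem stmt_5 {R B S : Type*} [CommRing R]
    [AddCommGroup B] [Module R B]
    [CommRing S] [Algebra R S] [Module.FaithfullyFlat R S]
    (mulB : B →ₗ[R] B →ₗ[R] B)
    (mulBS : (S ⊗[R] B) →ₗ[S] (S ⊗[R] B) →ₗ[S] (S ⊗[R] B))
    (hmulBS : ∀ (s₁ s₂ : S) (b₁ b₂ : B),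
      mulBS (s₁ ⊗ₜ b₁) (s₂ ⊗ₜ b₂) = (s₁ * s₂) ⊗ₜ (mulB b₁ b₂)) :
    Submodule.span R {x : B | ∃ b₁ b₂ : B, x = mulB b₁ b₂} = ⊤ ↔
      Submodule.span S {y : S ⊗[R] B | ∃ u v : S ⊗[R] B, y = mulBS u v} = ⊤ := by
  set N : Submodule R B := Submodule.span R {x : B | ∃ b₁ b₂ : B, x = mulB b₁ b₂}
  have key : Submodule.span S {y : S ⊗[R] B | ∃ u v : S ⊗[R] B, y = mulBS u v}
      = N.baseChange S := by
    rw [Submodule.baseChange_span]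
    apply le_antisymm
    · rw [Submodule.span_le]
      rintro - ⟨u, v, rfl⟩
      set P := Submodule.span S (TensorProduct.mk R S B 1 '' {x : B | ∃ b₁ b₂ : B, x = mulB b₁ b₂})
      induction u using TensorProduct.induction_on with
      | zero => simp
      | add u₁ u₂ h₁ h₂ => rw [map_add, LinearMap.add_apply]; exact P.add_mem h₁ h₂
      | tmul s b =>
        induction v using TensorProduct.induction_on with
        | zero => simp
        | add v₁ v₂ h₁ h₂ => rw [map_add]; exact P.add_mem h₁ h₂
        | tmul t c =>
          rw [hmulBS]
          have : (s * t) ⊗ₜ[R] (mulB b c) = (s * t) • ((1 : S) ⊗ₜ[R] (mulB b c)) := by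
            rw [smul_tmul', smul_eq_mul, mul_one]
          rw [this]
          exact P.smul_mem _ (Submodule.subset_span ⟨mulB b c, ⟨b, c, rfl⟩, rfl⟩)
    · rw [Submodule.span_le]
      rintro - ⟨-, ⟨b₁, b₂, rfl⟩, rfl⟩
      refine Submodule.subset_span ⟨(1 : S) ⊗ₜ b₁, (1 : S) ⊗ₜ b₂, ?_⟩
      rw [hmulBS, one_mul]
      rfl
  rw [key, baseChange_eq_top_iff]
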